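/- Let U = diag(u₁, ..., u_d) be a block-diagonal 2d×2d matrix with each uⱼ ∈ SU(2), and let X be a symmetric unitary d×d matrix. Then T = U⁻¹ (X ⊗ I₂) U is unitary and satisfies Tᵀ = -(I_d ⊗ J) T (I_d ⊗ J), where J = [[0, 1], [-1, 0]]. -/

import Mathlib

open Matrix
open scoped Kronecker

/-- Product of block-diagonal (d blocks of 2×2) matrices is block diagonal. -/
lemma blk_mul {d : ℕ} (a b : Fin d → Matrix (Fin 2) (Fin 2) ℂ)
    (A B : Matrix (Fin d × Fin 2) (Fin d × Fin 2) ℂ)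
    (hA : ∀ p q : Fin d × Fin 2, A p q = if p.1 = q.1 then a p.1 p.2 q.2 else 0)
    (hB : ∀ p q : Fin d × Fin 2, B p q = if p.1 = q.1 then b p.1 p.2 q.2 else 0) :
    ∀ p q : Fin d × Fin 2, (A * B) p q = if p.1 = q.1 then (a p.1 * b p.1) p.2 q.2 else 0 := by
  intro p q
  simp only [Matrix.mul_apply, Fintype.sum_prod_type, hA, hB]
  rw [Finset.sum_eq_single p.1]
  · by_cases h : p.1 = q.1
    · simp [h, Matrix.mul_apply]
    · simp [h]
  · intro j _ hj
    simp [Ne.symm hj]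
  · simp

lemma su2_symplectic (v : Matrix (Fin 2) (Fin 2) ℂ) (hdet : v.det = 1) :
    vᵀ * !![(0:ℂ), 1; -1, 0] * v = !![(0:ℂ), 1; -1, 0] := by
  rw [Matrix.det_fin_two] at hdet
  have ht : vᵀ = !![v 0 0, v 1 0; v 0 1, v 1 1] := by
    rw [Matrix.eta_fin_two vᵀ]; rfl
  rw [ht, Matrix.eta_fin_two v, Matrix.mul_fin_two, Matrix.mul_fin_two]
  ext i j
  fin_cases i <;> fin_cases j <;> simp <;>
    first
      | linear_combination hdet
      | linear_combination -hdet
      | ring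

theorem time_reversal_transition_matrix (d : ℕ)
    (u : Fin d → Matrix (Fin 2) (Fin 2) ℂ)
    (hu : ∀ j, u j ∈ Matrix.specialUnitaryGroup (Fin 2) ℂ)
    (X : Matrix (Fin d) (Fin d) ℂ)
    (hXsymm : Xᵀ = X) (hXunit : X ∈ Matrix.unitaryGroup (Fin d) ℂ)
    (U : Matrix (Fin d × Fin 2) (Fin d × Fin 2) ℂ)
    (hU : ∀ p q : Fin d × Fin 2, U p q = if p.1 = q.1 then u p.1 p.2 q.2 else 0)
    (J : Matrix (Fin 2) (Fin 2) ℂ) (hJ : J = !![0, 1; -1, 0])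
    (T : Matrix (Fin d × Fin 2) (Fin d × Fin 2) ℂ)
    (hT : T = U⁻¹ * (X ⊗ₖ (1 : Matrix (Fin 2) (Fin 2) ℂ)) * U) :
    T ∈ Matrix.unitaryGroup (Fin d × Fin 2) ℂ ∧
      Tᵀ = -(((1 : Matrix (Fin d) (Fin d) ℂ) ⊗ₖ J) * T *
        ((1 : Matrix (Fin d) (Fin d) ℂ) ⊗ₖ J)) := by
  set K : Matrix (Fin d × Fin 2) (Fin d × Fin 2) ℂ :=
    (1 : Matrix (Fin d) (Fin d) ℂ) ⊗ₖ J with hK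
  have huu : ∀ j, u j ∈ Matrix.unitaryGroup (Fin 2) ℂ :=
    fun j => ((Matrix.mem_specialUnitaryGroup_iff).mp (hu j)).1
  have hdet : ∀ j, (u j).det = 1 :=
    fun j => ((Matrix.mem_specialUnitaryGroup_iff).mp (hu j)).2
  -- entrywise descriptions
  have hstarU : ∀ p q : Fin d × Fin 2,
      (star U) p q = if p.1 = q.1 then (star (u p.1)) p.2 q.2 else 0 := by
    rintro ⟨i, k⟩ ⟨j, l⟩
    by_cases h : i = j
    · subst h
      simp [Matrix.star_apply, hU]
    · simp [Matrix.star_apply, hU, h, Ne.symm h]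
  have hKe : ∀ p q : Fin d × Fin 2, K p q = if p.1 = q.1 then J p.2 q.2 else 0 := by
    intro p q
    simp [hK, Matrix.one_apply, ite_mul]
  have hUt : ∀ p q : Fin d × Fin 2,
      Uᵀ p q = if p.1 = q.1 then (u p.1)ᵀ p.2 q.2 else 0 := by
    rintro ⟨i, k⟩ ⟨j, l⟩
    by_cases h : i = j
    · subst h
      simp [hU]
    · simp [hU, h, Ne.symm h]
  -- U is unitary
  have hUunit : U ∈ Matrix.unitaryGroup (Fin d × Fin 2) ℂ := by
    rw [Matrix.mem_unitaryGroup_iff]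
    ext p q
    rw [blk_mul u (fun j => star (u j)) U (star U) hU hstarU p q,
      (Matrix.mem_unitaryGroup_iff).mp (huu p.1)]
    obtain ⟨i, k⟩ := p
    obtain ⟨j, l⟩ := q
    by_cases h : i = j
    · subst h
      simp [Matrix.one_apply, Prod.ext_iff]
    · simp [Matrix.one_apply, Prod.ext_iff, h]
  have hUinv : U⁻¹ = star U :=
    Matrix.inv_eq_left_inv ((Matrix.mem_unitaryGroup_iff').mp hUunit)
  have hUUinv : U * U⁻¹ = 1 := by
    rw [hUinv]; exact (Matrix.mem_unitaryGroup_iff).mp hUunit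
  -- J * J = -1 and K * K = -1
  have hJJ : J * J = -1 := by
    subst hJ
    ext i j
    fin_cases i <;> fin_cases j <;>
      simp [Matrix.mul_apply, Fin.sum_univ_two, Matrix.one_apply]
  have hKK : K * K = -1 := by
    rw [hK, ← Matrix.mul_kronecker_mul, Matrix.one_mul, hJJ]
    ext p q
    obtain ⟨i, k⟩ := p
    obtain ⟨j, l⟩ := q
    by_cases h : i = j
    · subst h
      simp [Matrix.one_apply, Prod.ext_iff]
    · simp [Matrix.one_apply, Prod.ext_iff, h]
  have hKKl : ∀ M : Matrix (Fin d × Fin 2) (Fin d × Fin 2) ℂ, K * (K * M) = -M := by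
    intro M
    rw [← Matrix.mul_assoc, hKK, neg_one_mul]
  -- symplectic relation for U
  have hsymp : Uᵀ * K * U = K := by
    have h1 := blk_mul (fun j => (u j)ᵀ) (fun _ => J) Uᵀ K hUt hKe
    have h2 := blk_mul (fun j => (u j)ᵀ * J) u (Uᵀ * K) U h1 hU
    ext p q
    rw [h2 p q, hKe p q]
    by_cases h : p.1 = q.1
    · rw [if_pos h, if_pos h]
      have := su2_symplectic (u p.1) (hdet p.1)
      rw [← hJ] at this
      rw [this]
    · rw [if_neg h, if_neg h]
  have e1 : Uᵀ * K = K * U⁻¹ := by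
    calc Uᵀ * K = Uᵀ * K * (U * U⁻¹) := by rw [hUUinv, Matrix.mul_one]
    _ = (Uᵀ * K * U) * U⁻¹ := (Matrix.mul_assoc _ _ _).symm
    _ = K * U⁻¹ := by rw [hsymp]
  have hKnK : K * (-K) = 1 := by rw [Matrix.mul_neg, hKK, neg_neg]
  have hUt2 : Uᵀ = -(K * U⁻¹ * K) := by
    calc Uᵀ = Uᵀ * (K * (-K)) := by rw [hKnK, Matrix.mul_one]
    _ = (Uᵀ * K) * (-K) := (Matrix.mul_assoc _ _ _).symm
    _ = (K * U⁻¹) * (-K) := by rw [e1]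
    _ = -(K * U⁻¹ * K) := by rw [Matrix.mul_neg]
  have key : (K * U * K) * (K * U⁻¹ * K) = 1 := by
    simp only [Matrix.mul_assoc]
    rw [hKKl, Matrix.mul_neg, Matrix.mul_neg, ← Matrix.mul_assoc U, hUUinv,
      Matrix.one_mul, hKK, neg_neg]
  have hUtinv : (Uᵀ)⁻¹ = -(K * U * K) := by
    apply Matrix.inv_eq_left_inv
    rw [hUt2, neg_mul_neg]
    exact key
  -- X ⊗ 1 facts
  have hstarXk : star (X ⊗ₖ (1 : Matrix (Fin 2) (Fin 2) ℂ)) =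
      (star X) ⊗ₖ (1 : Matrix (Fin 2) (Fin 2) ℂ) := by
    ext p q
    simp [Matrix.star_apply, Matrix.one_apply, apply_ite (starRingEnd ℂ), eq_comm]
  have hXkunit : (X ⊗ₖ (1 : Matrix (Fin 2) (Fin 2) ℂ)) ∈
      Matrix.unitaryGroup (Fin d × Fin 2) ℂ := by
    rw [Matrix.mem_unitaryGroup_iff, hstarXk, ← Matrix.mul_kronecker_mul,
      (Matrix.mem_unitaryGroup_iff).mp hXunit, Matrix.mul_one, Matrix.one_kronecker_one]
  -- T is unitary
  have hTunit : T ∈ Matrix.unitaryGroup (Fin d × Fin 2) ℂ := by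
    rw [hT, hUinv]
    exact mul_mem (mul_mem (Unitary.star_mem hUunit) hXkunit) hUunit
  refine ⟨hTunit, ?_⟩
  -- transpose relation
  have hXkT : (X ⊗ₖ (1 : Matrix (Fin 2) (Fin 2) ℂ))ᵀ = X ⊗ₖ 1 := by
    rw [← Matrix.kroneckerMap_transpose, hXsymm, Matrix.transpose_one]
  have hKXK : ∀ M : Matrix (Fin d × Fin 2) (Fin d × Fin 2) ℂ,
      K * ((X ⊗ₖ (1 : Matrix (Fin 2) (Fin 2) ℂ)) * (K * M)) =
        -((X ⊗ₖ (1 : Matrix (Fin 2) (Fin 2) ℂ)) * M) := by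
    intro M
    have hcomm : K * (X ⊗ₖ (1 : Matrix (Fin 2) (Fin 2) ℂ)) =
        (X ⊗ₖ (1 : Matrix (Fin 2) (Fin 2) ℂ)) * K := by
      rw [hK, ← Matrix.mul_kronecker_mul, ← Matrix.mul_kronecker_mul,
        Matrix.one_mul, Matrix.mul_one, Matrix.one_mul, Matrix.mul_one]
    rw [← Matrix.mul_assoc, hcomm, Matrix.mul_assoc, hKKl, Matrix.mul_neg]
  rw [hT, Matrix.transpose_mul, Matrix.transpose_mul, hXkT,
    Matrix.transpose_nonsing_inv, hUtinv, hUt2]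
  simp only [Matrix.mul_assoc, Matrix.mul_neg, Matrix.neg_mul, neg_neg]
  rw [hKXK]
  simp only [Matrix.mul_neg, Matrix.neg_mul, neg_neg]
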